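/- Assume G := Cᵀ * C is invertible, let S ⊆ Fin n be a set of concept indices to erase, and let P : Matrix (Fin n) (Fin n) ℝ be the diagonal selector matrix with P j j = 1 for j ∈ S and P j j = 0 for j ∉ S (and zero off the diagonal). Then the vector r := e − C.mulVec (G⁻¹.mulVec (P.mulVec (Cᵀ.mulVec e))) satisfies (Cᵀ.mulVec r) j = 0 for every j ∈ S and (Cᵀ.mulVec r) j = (Cᵀ.mulVec e) j for every j ∉ S, and r is the unique minimizer of ‖r' − e‖ among all r' : Fin d → ℝ satisfying these score constraints. (One-shot multi-concept Ortho erasure formula.) -/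

import Mathlib

open Matrix

/-- One-shot multi-concept Ortho erasure: with `G := Cᵀ * C`
invertible, `S ⊆ Fin n` a set of concepts to erase, and `P` the diagonal selector
matrix of `S`, the vector `r := e − C.mulVec (G⁻¹.mulVec (P.mulVec (Cᵀ.mulVec e)))`
has concept score `0` on `S`, unchanged scores off `S`, and is the unique minimizer
of the Euclidean distance to `e` among all vectors satisfying these constraints. -/
theorem ortho_multi_concept_erasure {d n : ℕ}
    (C : Matrix (Fin d) (Fin n) ℝ) (e : EuclideanSpace ℝ (Fin d))
    (hG : IsUnit (Cᵀ * C)) (S : Set (Fin n))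
    (P : Matrix (Fin n) (Fin n) ℝ)
    (hPin : ∀ j ∈ S, P j j = 1)
    (hPout : ∀ j ∉ S, P j j = 0)
    (hPoff : ∀ j j' : Fin n, j ≠ j' → P j j' = 0) :
    (∀ j ∈ S,
      Cᵀ.mulVec (e - (WithLp.equiv 2 (Fin d → ℝ)).symm
        (C.mulVec ((Cᵀ * C)⁻¹.mulVec (P.mulVec (Cᵀ.mulVec e))))) j = 0) ∧
    (∀ j ∉ S,
      Cᵀ.mulVec (e - (WithLp.equiv 2 (Fin d → ℝ)).symm
        (C.mulVec ((Cᵀ * C)⁻¹.mulVec (P.mulVec (Cᵀ.mulVec e))))) j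
        = Cᵀ.mulVec e j) ∧
    ∀ r' : EuclideanSpace ℝ (Fin d),
      (∀ j ∈ S, Cᵀ.mulVec r' j = 0) →
      (∀ j ∉ S, Cᵀ.mulVec r' j = Cᵀ.mulVec e j) →
      ‖(e - (WithLp.equiv 2 (Fin d → ℝ)).symm
          (C.mulVec ((Cᵀ * C)⁻¹.mulVec (P.mulVec (Cᵀ.mulVec e))))) - e‖
        ≤ ‖r' - e‖ ∧
      (‖(e - (WithLp.equiv 2 (Fin d → ℝ)).symm
          (C.mulVec ((Cᵀ * C)⁻¹.mulVec (P.mulVec (Cᵀ.mulVec e))))) - e‖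
          = ‖r' - e‖ →
        r' = e - (WithLp.equiv 2 (Fin d → ℝ)).symm
          (C.mulVec ((Cᵀ * C)⁻¹.mulVec (P.mulVec (Cᵀ.mulVec e))))) := by
  classical
  have hdet : IsUnit (Cᵀ * C).det := (Matrix.isUnit_iff_isUnit_det _).mp hG
  set y : Fin n → ℝ := P.mulVec (Cᵀ.mulVec e) with hy
  set w : Fin n → ℝ := (Cᵀ * C)⁻¹.mulVec y with hw
  set v : Fin d → ℝ := C.mulVec w with hv
  have hCv : Cᵀ.mulVec v = y := by
    rw [hv, hw, Matrix.mulVec_mulVec, Matrix.mulVec_mulVec,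
      Matrix.mul_nonsing_inv _ hdet, Matrix.one_mulVec]
  have hyj : ∀ j, y j = P j j * Cᵀ.mulVec e j := by
    intro j
    rw [hy]
    simp only [Matrix.mulVec, dotProduct]
    exact Finset.sum_eq_single j (fun k _ hk => by rw [hPoff j k (Ne.symm hk), zero_mul])
      (fun h => absurd (Finset.mem_univ j) h)
  set r : EuclideanSpace ℝ (Fin d) := e - (WithLp.equiv 2 (Fin d → ℝ)).symm v with hr
  have hscore : Cᵀ.mulVec r = Cᵀ.mulVec e - y := by
    rw [show Cᵀ.mulVec r = Cᵀ.mulVec e - Cᵀ.mulVec v from Matrix.mulVec_sub Cᵀ e v, hCv]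
  refine ⟨?_, ?_, ?_⟩
  · intro j hj
    change (Cᵀ *ᵥ r.ofLp) j = _; rw [hscore]
    simp [hyj j, hPin j hj]
  · intro j hj
    change (Cᵀ *ᵥ r.ofLp) j = _; rw [hscore]
    simp [hyj j, hPout j hj]
  intro r' h1 h2
  have hsame : Cᵀ.mulVec r' = Cᵀ.mulVec r := by
    funext j
    by_cases hj : j ∈ S
    · rw [h1 j hj, hscore]; simp [hyj j, hPin j hj]
    · rw [h2 j hj, hscore]; simp [hyj j, hPout j hj]
  have hker : Cᵀ.mulVec (WithLp.equiv 2 (Fin d → ℝ) r' - WithLp.equiv 2 (Fin d → ℝ) r) = 0 := by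
    rw [Matrix.mulVec_sub]
    show Cᵀ.mulVec r' - Cᵀ.mulVec r = 0
    rw [hsame, sub_self]
  have hre : r - e = -((WithLp.equiv 2 (Fin d → ℝ)).symm v) := by
    rw [hr]; abel
  have horth : inner (𝕜 := ℝ) (r' - r) (r - e) = (0 : ℝ) := by
    rw [hre, EuclideanSpace.inner_eq_star_dotProduct]
    simp only [WithLp.ofLp_sub, WithLp.ofLp_neg, WithLp.equiv_symm_apply, WithLp.ofLp_toLp, star_trivial]
    rw [neg_dotProduct, hv, dotProduct_comm, Matrix.dotProduct_mulVec, ← Matrix.mulVec_transpose,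
      show Cᵀ *ᵥ (r'.ofLp - r.ofLp) = 0 from hker, zero_dotProduct, neg_zero]
  have hpyth : ‖r' - e‖ ^ 2 = ‖r' - r‖ ^ 2 + ‖r - e‖ ^ 2 := by
    have hsplit : r' - e = (r' - r) + (r - e) := by abel
    rw [hsplit, norm_add_sq_real, horth]
    ring
  have hle : ‖r - e‖ ≤ ‖r' - e‖ := by
    refine le_of_pow_le_pow_left₀ two_ne_zero (norm_nonneg _) ?_
    rw [hpyth]
    nlinarith [sq_nonneg ‖r' - r‖]
  refine ⟨hle, fun heq => ?_⟩
  have hsq : ‖r - e‖ ^ 2 = ‖r' - e‖ ^ 2 := by rw [heq]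
  have h0 : ‖r' - r‖ ^ 2 = 0 := by linarith [hpyth, hsq]
  exact sub_eq_zero.mp (norm_eq_zero.mp ((pow_eq_zero_iff two_ne_zero).mp h0))
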